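/- arXiv:0810.1483 — 2 statements merged into one kernel-verified Lean document; each statement's English description precedes it below -/
import Mathlib

section
/- The sequence P(n) = (T^L(n)+α)/(T(n)+2α) is a bounded martingale with respect to the natural filtration, and hence converges almost surely. -/
open MeasureTheory ProbabilityTheory Filter

/-- **The urn proportion process is a bounded martingale.**
In a generalized Pólya urn with time-dependent input sizes `I(n) > 0`,
total input `T(n) = I(0) + ⋯ + I(n-1)`, left total
`T^L(n) = T^L(n-1) + I(n-1)·D(n)` where `D(n) ∈ {0,1}` has conditional mean
`P(n-1) = (T^L(n-1)+α)/(T(n-1)+2α)` given the past, the sequence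
`P(n) = (T^L(n)+α)/(T(n)+2α)` is a martingale taking values in `[0,1]`
(in particular bounded), and hence converges almost surely. -/
theorem stmt1
    {Ω : Type*} {m0 : MeasurableSpace Ω} {μ : Measure Ω} [IsProbabilityMeasure μ]
    (α : ℝ) (hα : 0 < α)
    (ℱ : Filtration ℕ m0)
    (I : ℕ → Ω → ℝ) (hIpos : ∀ n ω, 0 < I n ω)
    (hIadapted : Adapted ℱ I)
    (D : ℕ → Ω → ℝ) (hD01 : ∀ n ω, D n ω = 0 ∨ D n ω = 1)
    (hDadapted : ∀ n, Measurable[ℱ (n + 1)] (D (n + 1)))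
    (T : ℕ → Ω → ℝ) (hT : ∀ n ω, T n ω = ∑ i ∈ Finset.range n, I i ω)
    (TL : ℕ → Ω → ℝ)
    (hTL0 : ∀ ω, TL 0 ω = 0)
    (hTLrec : ∀ n ω, TL (n + 1) ω = TL n ω + I n ω * D (n + 1) ω)
    (P : ℕ → Ω → ℝ)
    (hP : ∀ n ω, P n ω = (TL n ω + α) / (T n ω + 2 * α))
    (hcond : ∀ n, (fun ω => (μ[D (n + 1)|ℱ n]) ω) =ᵐ[μ] P n) :
    Martingale P ℱ μ ∧
    (∀ n ω, P n ω ∈ Set.Icc (0 : ℝ) 1) ∧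
    ∃ Plim : Ω → ℝ, ∀ᵐ ω ∂μ, Tendsto (fun n => P n ω) atTop (nhds (Plim ω)) := by
  -- basic pointwise bounds
  have hD01' : ∀ n ω, 0 ≤ D n ω ∧ D n ω ≤ 1 := by
    intro n ω; rcases hD01 n ω with h | h <;> rw [h] <;> norm_num
  have hTnn : ∀ n ω, 0 ≤ T n ω := by
    intro n ω; rw [hT]
    exact Finset.sum_nonneg fun i _ => (hIpos i ω).le
  have hTsucc : ∀ n ω, T (n + 1) ω = T n ω + I n ω := by
    intro n ω; rw [hT, hT, Finset.sum_range_succ]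
  have hTLb : ∀ n ω, 0 ≤ TL n ω ∧ TL n ω ≤ T n ω := by
    intro n
    induction n with
    | zero => intro ω; rw [hTL0, hT]; simp
    | succ n ih =>
      intro ω
      have h1 := (ih ω).1; have h2 := (ih ω).2
      have hd := hD01' (n + 1) ω
      have hi := hIpos n ω
      constructor
      · rw [hTLrec]
        have : 0 ≤ I n ω * D (n + 1) ω := mul_nonneg hi.le hd.1
        linarith
      · rw [hTLrec, hTsucc]
        have : I n ω * D (n + 1) ω ≤ I n ω * 1 := by
          apply mul_le_mul_of_nonneg_left hd.2 hi.le
        nlinarith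
  have hden : ∀ n ω, 0 < T n ω + 2 * α := fun n ω => by
    have := hTnn n ω; linarith
  have hPmem : ∀ n ω, P n ω ∈ Set.Icc (0 : ℝ) 1 := by
    intro n ω
    rw [hP]
    constructor
    · apply div_nonneg _ (hden n ω).le
      have := (hTLb n ω).1; linarith
    · rw [div_le_one (hden n ω)]
      have := (hTLb n ω).2; linarith
  -- measurability
  have hTmeas : ∀ n, Measurable[ℱ n] (T n) := by
    intro n
    have hfe : T n = fun ω => ∑ i ∈ Finset.range n, I i ω := funext fun ω => hT n ω
    rw [hfe]
    apply Finset.measurable_sum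
    intro i hi
    exact (hIadapted i).mono (ℱ.mono (Finset.mem_range.mp hi).le) le_rfl
  have hTLmeas : ∀ n, Measurable[ℱ n] (TL n) := by
    intro n
    induction n with
    | zero =>
      have hfe : TL 0 = fun _ => (0 : ℝ) := funext fun ω => hTL0 ω
      rw [hfe]; exact measurable_const
    | succ n ih =>
      have hfe : TL (n + 1) = fun ω => TL n ω + I n ω * D (n + 1) ω :=
        funext fun ω => hTLrec n ω
      rw [hfe]
      exact (ih.mono (ℱ.mono n.le_succ) le_rfl).add
        (((hIadapted n).mono (ℱ.mono n.le_succ) le_rfl).mul (hDadapted n))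
  have hPmeas : ∀ n, Measurable[ℱ n] (P n) := by
    intro n
    have hfe : P n = fun ω => (TL n ω + α) / (T n ω + 2 * α) := funext fun ω => hP n ω
    rw [hfe]
    exact ((hTLmeas n).add measurable_const).div ((hTmeas n).add measurable_const)
  have hPadapted : StronglyAdapted ℱ P := fun n => (hPmeas n).stronglyMeasurable
  -- integrability of bounded measurable functions
  have hbint : ∀ (f : Ω → ℝ), AEStronglyMeasurable f μ → (∀ ω, ‖f ω‖ ≤ 1) → Integrable f μ := by
    intro f hm hb
    exact (integrable_const (1 : ℝ)).mono' hm (Eventually.of_forall hb)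
  have hPint : ∀ n, Integrable (P n) μ := by
    intro n
    apply hbint _ (((hPmeas n).mono (ℱ.le n) le_rfl).aestronglyMeasurable)
    intro ω
    rw [Real.norm_eq_abs, abs_le]
    have := hPmem n ω
    exact ⟨by linarith [this.1], this.2⟩
  -- the martingale step
  have hstep : ∀ n, P n =ᵐ[μ] μ[P (n + 1)|ℱ n] := by
    intro n
    set a : Ω → ℝ := fun ω => (TL n ω + α) / (T (n + 1) ω + 2 * α) with ha
    set b : Ω → ℝ := fun ω => I n ω / (T (n + 1) ω + 2 * α) with hb
    have hT1meas : Measurable[ℱ n] (T (n + 1)) := by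
      have hfe : T (n + 1) = fun ω => T n ω + I n ω := funext fun ω => hTsucc n ω
      rw [hfe]
      exact (hTmeas n).add (hIadapted n)
    have hameas : Measurable[ℱ n] a :=
      ((hTLmeas n).add measurable_const).div (hT1meas.add measurable_const)
    have hbmeas : Measurable[ℱ n] b :=
      (hIadapted n).div (hT1meas.add measurable_const)
    have hden1 : ∀ ω, 0 < T (n + 1) ω + 2 * α := hden (n + 1)
    have hab01 : ∀ ω, 0 ≤ a ω ∧ a ω ≤ 1 ∧ 0 ≤ b ω ∧ b ω ≤ 1 := by
      intro ω
      have h1 := (hTLb n ω).1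
      have h2 := (hTLb n ω).2
      have h3 := hIpos n ω
      have h4 := hden1 ω
      have h5 := hTsucc n ω
      have h6 := hTnn n ω
      refine ⟨div_nonneg (by linarith) h4.le, ?_, div_nonneg h3.le h4.le, ?_⟩
      · rw [ha, div_le_one h4]; linarith
      · rw [hb, div_le_one h4]; linarith
    have haint : Integrable a μ := by
      apply hbint _ ((hameas.mono (ℱ.le n) le_rfl).aestronglyMeasurable)
      intro ω
      rw [Real.norm_eq_abs, abs_le]
      obtain ⟨h1, h2, _, _⟩ := hab01 ω
      exact ⟨by linarith, h2⟩
    have hDint : Integrable (D (n + 1)) μ := by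
      apply hbint _ (((hDadapted n).mono (ℱ.le (n+1)) le_rfl).aestronglyMeasurable)
      intro ω
      rw [Real.norm_eq_abs, abs_le]
      obtain ⟨h1, h2⟩ := hD01' (n + 1) ω
      exact ⟨by linarith, h2⟩
    have hbDint : Integrable (b * D (n + 1)) μ := by
      apply hbint _ (((hbmeas.mono (ℱ.le n) le_rfl).mul
        ((hDadapted n).mono (ℱ.le (n+1)) le_rfl)).aestronglyMeasurable)
      intro ω
      obtain ⟨_, _, h3, h4⟩ := hab01 ω
      obtain ⟨h5, h6⟩ := hD01' (n + 1) ω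
      simp only [Pi.mul_apply, Real.norm_eq_abs, abs_le]
      constructor
      · nlinarith
      · nlinarith
    -- decomposition P (n+1) = a + b * D (n+1)
    have hdecomp : P (n + 1) = a + b * D (n + 1) := by
      funext ω
      have h4 := hden1 ω
      rw [hP, hTLrec, Pi.add_apply, Pi.mul_apply, ha, hb]
      field_simp
      ring
    have key : μ[P (n + 1)|ℱ n] =ᵐ[μ] a + b * P n := by
      rw [hdecomp]
      calc μ[a + b * D (n + 1)|ℱ n]
          =ᵐ[μ] μ[a|ℱ n] + μ[b * D (n + 1)|ℱ n] := condExp_add haint hbDint _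
        _ =ᵐ[μ] a + b * μ[D (n + 1)|ℱ n] := by
            rw [condExp_of_stronglyMeasurable (ℱ.le n) hameas.stronglyMeasurable haint]
            exact EventuallyEq.add EventuallyEq.rfl
              (condExp_mul_of_stronglyMeasurable_left hbmeas.stronglyMeasurable hbDint hDint)
        _ =ᵐ[μ] a + b * P n := by
            filter_upwards [hcond n] with ω hω
            simp only [Pi.add_apply, Pi.mul_apply]
            rw [hω]
    have hfinal : a + b * P n = P n := by
      funext ω
      have h4 := hden1 ω
      have h5 := hden n ω
      have h6 := hTsucc n ω
      simp only [Pi.add_apply, Pi.mul_apply, ha, hb]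
      rw [hP]
      rw [h6] at h4 ⊢
      rw [div_mul_div_comm, div_add_div _ _ h4.ne' (mul_pos h4 h5).ne',
        div_eq_div_iff (mul_pos h4 (mul_pos h4 h5)).ne' h5.ne']
      ring
    rw [← hfinal]
    exact key.symm
  refine ⟨martingale_nat hPadapted hPint hstep, hPmem, ?_⟩
  -- convergence
  have hmart := martingale_nat hPadapted hPint hstep
  have hbdd : ∀ n, eLpNorm (P n) 1 μ ≤ ((1 : NNReal) : ENNReal) := by
    intro n
    have h := eLpNorm_le_of_ae_bound (p := 1) (μ := μ) (f := P n)
      (C := 1) (Eventually.of_forall fun ω => by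
        rw [Real.norm_eq_abs, abs_le]
        have := hPmem n ω
        exact ⟨by linarith [this.1], this.2⟩)
    simpa using h
  exact ⟨ℱ.limitProcess P μ, hmart.submartingale.ae_tendsto_limitProcess hbdd⟩
end

section
/- Let d_n ∈ {0,1} be adapted to a filtration F_n with E[d_{n+1} | F_n] = p_n, where p_n is an F_n-measurable [0,1]-valued martingale converging a.s. to p, and suppose (1/n)Σ_{i=1}^n d_i → p a.s. Then the switching rate S(n) = (1/(n-1))·Σ_{i=2}^n [d_i(1-d_{i-1}) + d_{i-1}(1-d_i)] converges almost surely to 2p(1-p). -/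
open MeasureTheory ProbabilityTheory Filter
open Topology

section Aux

variable {Ω : Type*} {m0 : MeasurableSpace Ω} {μ : Measure Ω} [IsProbabilityMeasure μ]

lemma myIntegrable_of_bdd {f : Ω → ℝ} (hm : AEStronglyMeasurable f μ) {C : ℝ}
    (h : ∀ ω, |f ω| ≤ C) : Integrable f μ :=
  (integrable_const C).mono' hm (ae_of_all _ fun ω => by simpa using h ω)

lemma slln_md (ℱ : Filtration ℕ m0) (Z : ℕ → Ω → ℝ)
    (hZm : ∀ j, StronglyMeasurable[ℱ (j+1)] (Z j))
    (hZb : ∀ j ω, |Z j ω| ≤ 1)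
    (hZc : ∀ j, μ[Z j | ℱ j] =ᵐ[μ] 0) :
    ∀ᵐ ω ∂μ, Tendsto (fun n => (∑ j ∈ Finset.range n, Z j ω) / (n:ℝ)) atTop (𝓝 0) := by
  have hZm0 : ∀ j, StronglyMeasurable (Z j) := fun j => (hZm j).mono (ℱ.le _)
  have hZint : ∀ j, Integrable (Z j) μ := fun j =>
    myIntegrable_of_bdd (hZm0 j).aestronglyMeasurable (hZb j)
  have hZZint : ∀ j k, Integrable (fun ω => Z j ω * Z k ω) μ := by
    intro j k
    refine myIntegrable_of_bdd ((hZm0 j).mul (hZm0 k)).aestronglyMeasurable (C := 1) fun ω => ?_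
    rw [abs_mul]
    exact mul_le_one₀ (hZb j ω) (abs_nonneg _) (hZb k ω)
  have horth : ∀ j k, j < k → ∫ ω, Z j ω * Z k ω ∂μ = 0 := by
    intro j k hjk
    have hm : ℱ k ≤ m0 := ℱ.le k
    have hZjk : StronglyMeasurable[ℱ k] (Z j) := (hZm j).mono (ℱ.mono hjk)
    have hpull : μ[(fun ω => Z j ω * Z k ω)|ℱ k] =ᵐ[μ] fun ω => Z j ω * (μ[Z k|ℱ k]) ω :=
      condExp_mul_of_stronglyMeasurable_left hZjk (hZZint j k) (hZint k)
    have h0 : μ[(fun ω => Z j ω * Z k ω)|ℱ k] =ᵐ[μ] fun _ => (0:ℝ) := by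
      refine hpull.trans ?_
      filter_upwards [hZc k] with ω hω
      simp [hω]
    calc ∫ ω, Z j ω * Z k ω ∂μ = ∫ ω, (μ[(fun ω => Z j ω * Z k ω)|ℱ k]) ω ∂μ :=
          (integral_condExp hm).symm
      _ = 0 := by rw [integral_congr_ae h0]; simp
  set S : ℕ → Ω → ℝ := fun n ω => ∑ j ∈ Finset.range n, Z j ω with hS
  have hSb : ∀ n ω, |S n ω| ≤ n := by
    intro n ω
    calc |S n ω| ≤ ∑ j ∈ Finset.range n, |Z j ω| := Finset.abs_sum_le_sum_abs _ _
      _ ≤ ∑ j ∈ Finset.range n, 1 := Finset.sum_le_sum fun j _ => hZb j ω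
      _ = n := by simp
  have hSm : ∀ n, StronglyMeasurable (S n) := by
    intro n
    exact Finset.stronglyMeasurable_fun_sum _ fun j _ => hZm0 j
  have hSZint : ∀ n j, Integrable (fun ω => S n ω * Z j ω) μ := by
    intro n j
    refine myIntegrable_of_bdd ((hSm n).mul (hZm0 j)).aestronglyMeasurable (C := n) fun ω => ?_
    rw [abs_mul]
    calc |S n ω| * |Z j ω| ≤ n * 1 :=
          mul_le_mul (hSb n ω) (hZb j ω) (abs_nonneg _) (Nat.cast_nonneg n)
      _ = n := by ring
  have hSsqint : ∀ n, Integrable (fun ω => (S n ω)^2) μ := by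
    intro n
    refine myIntegrable_of_bdd ((hSm n).pow 2).aestronglyMeasurable (C := (n:ℝ)^2) fun ω => ?_
    rw [abs_pow]
    exact pow_le_pow_left₀ (abs_nonneg _) (hSb n ω) 2
  have hSZ0 : ∀ n, ∫ ω, S n ω * Z n ω ∂μ = 0 := by
    intro n
    have : (fun ω => S n ω * Z n ω) = fun ω => ∑ j ∈ Finset.range n, Z j ω * Z n ω := by
      funext ω; rw [hS]; rw [Finset.sum_mul]
    rw [this, integral_finset_sum _ fun j _ => hZZint j n]
    exact Finset.sum_eq_zero fun j hj => horth j n (Finset.mem_range.mp hj)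
  have hsq : ∀ n, ∫ ω, (S n ω)^2 ∂μ ≤ (n:ℝ) := by
    intro n
    induction n with
    | zero => simp [hS]
    | succ n ih =>
      have hexp : ∀ ω, (S (n+1) ω)^2 = (S n ω)^2 + 2 * (S n ω * Z n ω) + (Z n ω)^2 := by
        intro ω
        have : S (n+1) ω = S n ω + Z n ω := by rw [hS]; exact Finset.sum_range_succ _ n
        rw [this]; ring
      have hZsqint : Integrable (fun ω => (Z n ω)^2) μ := by
        refine myIntegrable_of_bdd ((hZm0 n).pow 2).aestronglyMeasurable (C := 1) fun ω => ?_
        rw [abs_pow]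
        calc |Z n ω|^2 ≤ 1^2 := pow_le_pow_left₀ (abs_nonneg _) (hZb n ω) 2
          _ = 1 := one_pow 2
      have hZsqle : ∫ ω, (Z n ω)^2 ∂μ ≤ 1 := by
        calc ∫ ω, (Z n ω)^2 ∂μ ≤ ∫ _ω, (1:ℝ) ∂μ := by
              refine integral_mono hZsqint (integrable_const 1) fun ω => ?_
              calc (Z n ω)^2 = |Z n ω|^2 := (sq_abs _).symm
                _ ≤ 1^2 := pow_le_pow_left₀ (abs_nonneg _) (hZb n ω) 2
                _ = 1 := one_pow 2
          _ = 1 := by simp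
      calc ∫ ω, (S (n+1) ω)^2 ∂μ
          = ∫ ω, ((S n ω)^2 + 2 * (S n ω * Z n ω) + (Z n ω)^2) ∂μ := by
            exact integral_congr_ae (ae_of_all _ fun ω => hexp ω)
        _ = ∫ ω, (S n ω)^2 ∂μ + 2 * ∫ ω, S n ω * Z n ω ∂μ + ∫ ω, (Z n ω)^2 ∂μ := by
            have h1 : Integrable (fun ω => S n ω ^ 2 + 2 * (S n ω * Z n ω)) μ :=
              (hSsqint n).add ((hSZint n n).const_mul 2)
            have h2 : Integrable (fun ω => 2 * (S n ω * Z n ω)) μ := (hSZint n n).const_mul 2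
            rw [integral_add h1 hZsqint, integral_add (hSsqint n) h2, integral_const_mul]
        _ ≤ (n:ℝ) + 2 * 0 + 1 := by
            rw [hSZ0 n]
            exact add_le_add (add_le_add ih le_rfl) hZsqle
        _ = ((n+1 : ℕ):ℝ) := by push_cast; ring
  -- Chebyshev along squares
  have hcheb : ∀ (ε : ℝ), 0 < ε → ∀ k : ℕ,
      μ {ω | ε ≤ |S (k*k) ω / ((k*k : ℕ):ℝ)|}
        ≤ ENNReal.ofReal (1/(ε^2) * (1/(k:ℝ)^2)) := by
    intro ε hε k
    rcases Nat.eq_zero_or_pos k with hk | hk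
    · subst hk
      have hempty : {ω | ε ≤ |S 0 ω / ((0*0 : ℕ):ℝ)|} = ∅ := by
        ext ω
        simp [hS, hε.not_ge]
      rw [hempty]
      simp
    · have hkpos : (0:ℝ) < (k:ℝ) := Nat.cast_pos.mpr hk
      have hmpos : (0:ℝ) < ((k*k : ℕ):ℝ) := Nat.cast_pos.mpr (Nat.mul_pos hk hk)
      have hsub : {ω | ε ≤ |S (k*k) ω / ((k*k : ℕ):ℝ)|}
          ⊆ {ω | ε^2*((k*k:ℕ):ℝ)^2 ≤ (S (k*k) ω)^2} := by
        intro ω hω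
        simp only [Set.mem_setOf_eq] at hω ⊢
        rw [abs_div, abs_of_pos hmpos, le_div_iff₀ hmpos] at hω
        calc ε^2*((k*k:ℕ):ℝ)^2 = (ε*((k*k:ℕ):ℝ))^2 := by ring
          _ ≤ |S (k*k) ω|^2 := by
              apply pow_le_pow_left₀ (by positivity) hω
          _ = (S (k*k) ω)^2 := sq_abs _
      have hmark := mul_meas_ge_le_integral_of_nonneg
        (f := fun ω => (S (k*k) ω)^2) (ae_of_all _ fun ω => sq_nonneg _)
        (hSsqint (k*k)) (ε^2*((k*k:ℕ):ℝ)^2)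
      have hlevel : (0:ℝ) < ε^2*((k*k:ℕ):ℝ)^2 := by positivity
      have hBfin := measure_ne_top μ {ω | ε^2*((k*k:ℕ):ℝ)^2 ≤ (S (k*k) ω)^2}
      have htoReal : (μ {ω | ε ≤ |S (k*k) ω / ((k*k : ℕ):ℝ)|}).toReal
          ≤ 1/(ε^2) * (1/(k:ℝ)^2) := by
        have hAB : (μ {ω | ε ≤ |S (k*k) ω / ((k*k : ℕ):ℝ)|}).toReal
            ≤ (μ {ω | ε^2*((k*k:ℕ):ℝ)^2 ≤ (S (k*k) ω)^2}).toReal :=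
          ENNReal.toReal_mono hBfin (measure_mono hsub)
        have hB : (μ {ω | ε^2*((k*k:ℕ):ℝ)^2 ≤ (S (k*k) ω)^2}).toReal
            ≤ ((k*k:ℕ):ℝ) / (ε^2*((k*k:ℕ):ℝ)^2) := by
          rw [le_div_iff₀ hlevel, mul_comm]
          exact hmark.trans (hsq (k*k))
        refine hAB.trans (hB.trans (le_of_eq ?_))
        have hcast : ((k*k:ℕ):ℝ) = (k:ℝ)*(k:ℝ) := by push_cast; ring
        rw [hcast]
        field_simp
      exact (ENNReal.le_ofReal_iff_toReal_le (measure_ne_top _ _) (by positivity)).mpr htoReal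
  -- Borel-Cantelli
  have hBC : ∀ᵐ ω ∂μ, ∀ m : ℕ, ∀ᶠ k in atTop,
      |S (k*k) ω / ((k*k : ℕ):ℝ)| < 1/((m:ℝ)+1) := by
    rw [ae_all_iff]
    intro m
    have hε : (0:ℝ) < 1/((m:ℝ)+1) := by positivity
    have hsum : (∑' k : ℕ, μ {ω | 1/((m:ℝ)+1) ≤ |S (k*k) ω / ((k*k : ℕ):ℝ)|}) ≠ ⊤ := by
      refine ne_top_of_le_ne_top ?_ (ENNReal.tsum_le_tsum fun k => hcheb _ hε k)
      have hsummable : Summable (fun k : ℕ => 1/((1/((m:ℝ)+1))^2) * (1/(k:ℝ)^2)) := by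
        apply Summable.mul_left
        exact_mod_cast Real.summable_one_div_nat_pow.mpr one_lt_two
      rw [← ENNReal.ofReal_tsum_of_nonneg (fun k => by positivity) hsummable]
      exact ENNReal.ofReal_ne_top
    filter_upwards [ae_eventually_notMem hsum] with ω hω
    filter_upwards [hω] with k hk
    simpa [not_le] using hk
  filter_upwards [hBC] with ω hω
  -- convergence along squares
  have hsubseq : Tendsto (fun k : ℕ => S (k*k) ω / ((k*k : ℕ):ℝ)) atTop (𝓝 0) := by
    rw [NormedAddCommGroup.tendsto_nhds_zero]
    intro ε hε
    obtain ⟨m, hm⟩ := exists_nat_one_div_lt hε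
    filter_upwards [hω m] with k hk
    rw [Real.norm_eq_abs]
    exact hk.trans hm
  -- interpolation
  have hsqrt_tendsto : Tendsto (fun n : ℕ => Nat.sqrt n) atTop atTop := by
    refine tendsto_atTop.mpr fun b => ?_
    filter_upwards [eventually_ge_atTop (b*b)] with n hn
    calc b = Nat.sqrt (b*b) := (Nat.sqrt_eq b).symm
      _ ≤ Nat.sqrt n := Nat.sqrt_le_sqrt hn
  have hgto : Tendsto (fun k : ℕ => |S (k*k) ω / ((k*k:ℕ):ℝ)| + 2/(k:ℝ)) atTop (𝓝 0) := by
    have h1 : Tendsto (fun k : ℕ => |S (k*k) ω / ((k*k:ℕ):ℝ)|) atTop (𝓝 0) := by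
      simpa using hsubseq.abs
    have h2 := tendsto_const_div_atTop_nhds_zero_nat (2:ℝ)
    simpa using h1.add h2
  refine squeeze_zero_norm' ?_ (hgto.comp hsqrt_tendsto)
  filter_upwards [eventually_ge_atTop 1] with n hn
  have hk1 : 1 ≤ Nat.sqrt n := Nat.sqrt_pos.mpr hn
  set k := Nat.sqrt n with hkdef
  have hkk_le : k*k ≤ n := Nat.sqrt_le n
  have hn_lt : n < (k+1)*(k+1) := Nat.lt_succ_sqrt n
  have hkposR : (0:ℝ) < (k:ℝ) := by exact_mod_cast hk1
  have hkkposR : (0:ℝ) < (k:ℝ)*(k:ℝ) := by positivity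
  have hnposR : (0:ℝ) < (n:ℝ) := by exact_mod_cast hn
  have hdiff : |S n ω - S (k*k) ω| ≤ 2*(k:ℝ) := by
    have hsum : S n ω - S (k*k) ω = ∑ j ∈ Finset.Ico (k*k) n, Z j ω := by
      rw [hS]
      exact (Finset.sum_Ico_eq_sub _ hkk_le).symm
    rw [hsum]
    calc |∑ j ∈ Finset.Ico (k*k) n, Z j ω| ≤ ∑ j ∈ Finset.Ico (k*k) n, |Z j ω| :=
          Finset.abs_sum_le_sum_abs _ _
      _ ≤ ∑ j ∈ Finset.Ico (k*k) n, 1 := Finset.sum_le_sum fun j _ => hZb j ω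
      _ = ((n - k*k : ℕ):ℝ) := by simp
      _ ≤ 2*(k:ℝ) := by
          have hexp : (k+1)*(k+1) = k*k + 2*k + 1 := by ring
          have : n - k*k ≤ 2*k := by omega
          exact_mod_cast this
  have hSn : |S n ω| ≤ |S (k*k) ω| + 2*(k:ℝ) := by
    calc |S n ω| = |S (k*k) ω + (S n ω - S (k*k) ω)| := by ring_nf
      _ ≤ |S (k*k) ω| + |S n ω - S (k*k) ω| := abs_add_le _ _
      _ ≤ |S (k*k) ω| + 2*(k:ℝ) := by linarith
  have hcastkk : ((k*k:ℕ):ℝ) = (k:ℝ)*(k:ℝ) := by push_cast; ring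
  have hkk_leR : (k:ℝ)*(k:ℝ) ≤ (n:ℝ) := by exact_mod_cast hkk_le
  rw [Real.norm_eq_abs, abs_div, abs_of_pos hnposR]
  calc |S n ω| / (n:ℝ) ≤ (|S (k*k) ω| + 2*(k:ℝ)) / ((k:ℝ)*(k:ℝ)) := by
        apply div_le_div₀ (by positivity) hSn hkkposR hkk_leR
    _ = |S (k*k) ω| / ((k:ℝ)*(k:ℝ)) + 2/(k:ℝ) := by field_simp
    _ = |S (k*k) ω / ((k*k:ℕ):ℝ)| + 2/(k:ℝ) := by
        congr 1
        rw [abs_div, hcastkk, abs_of_pos hkkposR]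

lemma tendsto_nat_div_succ : Tendsto (fun m : ℕ => (m:ℝ)/((m:ℝ)+1)) atTop (𝓝 1) := by
  have h1 : Tendsto (fun m : ℕ => 1 - 1/((m:ℝ)+1)) atTop (𝓝 1) := by
    simpa using tendsto_const_nhds.sub (tendsto_one_div_add_atTop_nhds_zero_nat (𝕜 := ℝ))
  refine h1.congr fun m => ?_
  have : ((m:ℝ)+1) ≠ 0 := by positivity
  field_simp; ring

lemma tendsto_div_succ (f : ℕ → ℝ) (L : ℝ) (h : Tendsto (fun m => f m / (m:ℝ)) atTop (𝓝 L)) :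
    Tendsto (fun m => f m / ((m:ℝ)+1)) atTop (𝓝 L) := by
  have h2 := h.mul tendsto_nat_div_succ
  rw [mul_one] at h2
  refine h2.congr' ?_
  filter_upwards [eventually_ge_atTop 1] with m hm
  have hm0 : (m:ℝ) ≠ 0 := by
    have : (0:ℝ) < (m:ℝ) := by exact_mod_cast hm
    exact this.ne'
  have hm1 : ((m:ℝ)+1) ≠ 0 := by positivity
  field_simp

lemma tendsto_succ_div_nat : Tendsto (fun m : ℕ => ((m:ℝ)+1)/(m:ℝ)) atTop (𝓝 1) := by
  have h1 : Tendsto (fun m : ℕ => 1 + 1/(m:ℝ)) atTop (𝓝 1) := by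
    simpa using tendsto_const_nhds.add (tendsto_const_div_atTop_nhds_zero_nat (1:ℝ))
  refine h1.congr' ?_
  filter_upwards [eventually_ge_atTop 1] with m hm
  have hm0 : (m:ℝ) ≠ 0 := by
    have : (0:ℝ) < (m:ℝ) := by exact_mod_cast hm
    exact this.ne'
  field_simp

lemma tendsto_div_shift (f : ℕ → ℝ) (L : ℝ) (h : Tendsto (fun m => f m / (m:ℝ)) atTop (𝓝 L)) :
    Tendsto (fun m => f (m+1) / (m:ℝ)) atTop (𝓝 L) := by
  have h1 : Tendsto (fun m : ℕ => f (m+1) / ((m:ℝ)+1)) atTop (𝓝 L) := by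
    have := (tendsto_add_atTop_iff_nat 1).mpr h
    refine this.congr fun m => ?_
    push_cast
    ring_nf
  have h2 := h1.mul tendsto_succ_div_nat
  rw [mul_one] at h2
  refine h2.congr fun m => ?_
  have hm1 : ((m:ℝ)+1) ≠ 0 := by positivity
  rw [div_mul_div_comm, mul_comm (f (m+1)) ((m:ℝ)+1), mul_div_mul_left _ _ hm1]

lemma tendsto_div_shift' (f : ℕ → ℝ) (L : ℝ)
    (h : Tendsto (fun m => f (m+1) / ((m:ℝ)+1)) atTop (𝓝 L)) :
    Tendsto (fun m => f m / (m:ℝ)) atTop (𝓝 L) := by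
  refine (tendsto_add_atTop_iff_nat 1).mp ?_
  refine h.congr fun m => ?_
  push_cast
  ring_nf

end Aux

/-- **Asymptotic switching rate.**
Let `d n ∈ {0,1}` be adapted to a filtration `ℱ` with `E[d (n+1) | ℱ n] = p n`,
where `p` is a `[0,1]`-valued martingale converging a.s. to `plim`, and suppose
`(1/n) ∑_{i=1}^n d i → plim` almost surely.  Then the switching rate
`S(n) = (1/(n-1)) ∑_{i=2}^n [d i (1 - d (i-1)) + d (i-1) (1 - d i)]`
converges almost surely to `2 · plim · (1 - plim)`. -/
theorem stmt11
    {Ω : Type*} {m0 : MeasurableSpace Ω} {μ : Measure Ω} [IsProbabilityMeasure μ]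
    (ℱ : Filtration ℕ m0)
    (d : ℕ → Ω → ℝ)
    (hdadapted : Adapted ℱ d)
    (hd01 : ∀ n ω, d n ω = 0 ∨ d n ω = 1)
    (p : ℕ → Ω → ℝ)
    (hp01 : ∀ n ω, p n ω ∈ Set.Icc (0 : ℝ) 1)
    (hpmart : Martingale p ℱ μ)
    (hcond : ∀ n, (fun ω => (μ[d (n + 1)|ℱ n]) ω) =ᵐ[μ] p n)
    (plim : Ω → ℝ)
    (hplim : ∀ᵐ ω ∂μ, Tendsto (fun n => p n ω) atTop (nhds (plim ω)))
    (havg : ∀ᵐ ω ∂μ, Tendsto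
      (fun n => (∑ i ∈ Finset.Icc 1 n, d i ω) / (n : ℝ)) atTop (nhds (plim ω))) :
    ∀ᵐ ω ∂μ, Tendsto
      (fun n => (∑ i ∈ Finset.Icc 2 n,
          (d i ω * (1 - d (i - 1) ω) + d (i - 1) ω * (1 - d i ω))) / ((n : ℝ) - 1))
      atTop (nhds (2 * plim ω * (1 - plim ω))) := by
  -- basic facts
  have hd_abs : ∀ n ω, |d n ω| ≤ 1 := by
    intro n ω; rcases hd01 n ω with h | h <;> rw [h] <;> norm_num
  have hdm0 : ∀ n, StronglyMeasurable (d n) := fun n => (hdadapted n).stronglyMeasurable.mono (ℱ.le n)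
  have hpm0 : ∀ n, StronglyMeasurable (p n) := fun n => (hpmart.stronglyAdapted n).mono (ℱ.le n)
  have hdint : ∀ n, Integrable (d n) μ := fun n =>
    myIntegrable_of_bdd (hdm0 n).aestronglyMeasurable (hd_abs n)
  have hddint : ∀ n k, Integrable (fun ω => d n ω * d k ω) μ := by
    intro n k
    refine myIntegrable_of_bdd ((hdm0 n).mul (hdm0 k)).aestronglyMeasurable (C := 1) fun ω => ?_
    rw [abs_mul]
    exact mul_le_one₀ (hd_abs n ω) (abs_nonneg _) (hd_abs k ω)
  have hp_abs : ∀ n ω, |p n ω| ≤ 1 := by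
    intro n ω
    obtain ⟨h0, h1⟩ := hp01 n ω
    rw [abs_le]; constructor <;> linarith
  have hdpint : ∀ n, Integrable (fun ω => d n ω * p n ω) μ := by
    intro n
    refine myIntegrable_of_bdd ((hdm0 n).mul (hpm0 n)).aestronglyMeasurable (C := 1) fun ω => ?_
    rw [abs_mul]
    exact mul_le_one₀ (hd_abs n ω) (abs_nonneg _) (hp_abs n ω)
  -- the martingale differences
  set Z : ℕ → Ω → ℝ := fun j ω => d j ω * d (j+1) ω - d j ω * p j ω with hZ
  have hZm : ∀ j, StronglyMeasurable[ℱ (j+1)] (Z j) := by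
    intro j
    have h1 : StronglyMeasurable[ℱ (j+1)] (d j) := (hdadapted j).stronglyMeasurable.mono (ℱ.mono (Nat.le_succ j))
    have h2 : StronglyMeasurable[ℱ (j+1)] (p j) := (hpmart.stronglyAdapted j).mono (ℱ.mono (Nat.le_succ j))
    exact (h1.mul (hdadapted (j+1)).stronglyMeasurable).sub (h1.mul h2)
  have hZb : ∀ j ω, |Z j ω| ≤ 1 := by
    intro j ω
    obtain ⟨hp0, hp1⟩ := hp01 j ω
    have h1 : Z j ω = d j ω * (d (j+1) ω - p j ω) := by rw [hZ]; ring
    rcases hd01 j ω with h | h <;> rcases hd01 (j+1) ω with h' | h' <;>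
      rw [abs_le] <;> constructor <;> rw [h1, h, h'] <;> simp <;> linarith
  have hZc : ∀ j, μ[Z j | ℱ j] =ᵐ[μ] 0 := by
    intro j
    have hsub : μ[Z j | ℱ j] =ᵐ[μ]
        μ[(fun ω => d j ω * d (j+1) ω) | ℱ j] - μ[(fun ω => d j ω * p j ω) | ℱ j] :=
      condExp_sub (hddint j (j+1)) (hdpint j) (ℱ j)
    have h1 : μ[(fun ω => d j ω * d (j+1) ω) | ℱ j] =ᵐ[μ] fun ω => d j ω * p j ω := by
      have hpull : μ[(fun ω => d j ω * d (j+1) ω) | ℱ j]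
          =ᵐ[μ] fun ω => d j ω * (μ[d (j+1) | ℱ j]) ω :=
        condExp_mul_of_stronglyMeasurable_left (hdadapted j).stronglyMeasurable (hddint j (j+1)) (hdint (j+1))
      refine hpull.trans ?_
      filter_upwards [hcond j] with ω hω
      rw [hω]
    have h2 : μ[(fun ω => d j ω * p j ω) | ℱ j] = fun ω => d j ω * p j ω :=
      condExp_of_stronglyMeasurable (ℱ.le j) ((hdadapted j).stronglyMeasurable.mul (hpmart.stronglyAdapted j)) (hdpint j)
    filter_upwards [hsub, h1] with ω hωs hω1
    rw [Pi.zero_apply, hωs, Pi.sub_apply, hω1, h2]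
    ring
  have hT := slln_md ℱ Z hZm hZb hZc
  filter_upwards [hT, hplim, havg] with ω hTω hpω havgω
  -- averages in range form
  have havg' : Tendsto (fun m : ℕ => (∑ j ∈ Finset.range m, d (j+1) ω) / (m:ℝ))
      atTop (𝓝 (plim ω)) := by
    refine havgω.congr fun m => ?_
    congr 1
    rw [← Finset.Ico_add_one_right_eq_Icc, Finset.sum_Ico_eq_sum_range]
    simp [add_comm]
  -- all-indices average
  have h_dall : Tendsto (fun m : ℕ => (∑ j ∈ Finset.range m, d j ω) / (m:ℝ))
      atTop (𝓝 (plim ω)) := by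
    refine tendsto_div_shift' _ _ ?_
    have h1 : Tendsto (fun m : ℕ => (∑ j ∈ Finset.range m, d (j+1) ω) / ((m:ℝ)+1))
        atTop (𝓝 (plim ω)) := tendsto_div_succ _ _ havg'
    have h2 : Tendsto (fun m : ℕ => d 0 ω / ((m:ℝ)+1)) atTop (𝓝 0) :=
      tendsto_div_succ _ _ (tendsto_const_div_atTop_nhds_zero_nat (d 0 ω))
    have h3 := h1.add h2
    rw [add_zero] at h3
    refine h3.congr fun m => ?_
    rw [Finset.sum_range_succ' (fun j => d j ω) m, add_div]
  -- Cesàro for p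
  have hB : Tendsto (fun m : ℕ => (∑ j ∈ Finset.range m, d j ω * p j ω) / (m:ℝ))
      atTop (𝓝 (plim ω * plim ω)) := by
    have t1 : Tendsto (fun m : ℕ => (∑ j ∈ Finset.range m, d j ω * (p j ω - plim ω)) / (m:ℝ))
        atTop (𝓝 0) := by
      have hpz : Tendsto (fun j => |p j ω - plim ω|) atTop (𝓝 0) := by
        have h0 : Tendsto (fun j => p j ω - plim ω) atTop (𝓝 (plim ω - plim ω)) :=
          hpω.sub tendsto_const_nhds
        rw [sub_self] at h0
        simpa using h0.abs
      have hces := hpz.cesaro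
      refine squeeze_zero_norm' ?_ hces
      filter_upwards [eventually_ge_atTop 1] with m hm
      have hmpos : (0:ℝ) < (m:ℝ) := by exact_mod_cast hm
      rw [Real.norm_eq_abs, abs_div, abs_of_pos hmpos, inv_mul_eq_div]
      refine (div_le_div_iff_of_pos_right hmpos).mpr ?_
      refine (Finset.abs_sum_le_sum_abs _ _).trans (Finset.sum_le_sum fun j _ => ?_)
      rw [abs_mul]
      calc |d j ω| * |p j ω - plim ω| ≤ 1 * |p j ω - plim ω| :=
            mul_le_mul_of_nonneg_right (hd_abs j ω) (abs_nonneg _)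
        _ = |p j ω - plim ω| := one_mul _
    have t2 : Tendsto (fun m : ℕ => plim ω * ((∑ j ∈ Finset.range m, d j ω) / (m:ℝ)))
        atTop (𝓝 (plim ω * plim ω)) := h_dall.const_mul (plim ω)
    have t3 := t1.add t2
    rw [zero_add] at t3
    refine t3.congr fun m => ?_
    have hnum : ∑ j ∈ Finset.range m, d j ω * p j ω
        = (∑ j ∈ Finset.range m, d j ω * (p j ω - plim ω))
          + plim ω * ∑ j ∈ Finset.range m, d j ω := by
      rw [Finset.mul_sum, ← Finset.sum_add_distrib]
      exact Finset.sum_congr rfl fun j _ => by ring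
    rw [hnum, add_div, mul_div_assoc]
  -- product average
  have hC : Tendsto (fun m : ℕ => (∑ j ∈ Finset.range m, d j ω * d (j+1) ω) / (m:ℝ))
      atTop (𝓝 (plim ω * plim ω)) := by
    have t3 := hTω.add hB
    rw [zero_add] at t3
    refine t3.congr fun m => ?_
    have hnum : ∑ j ∈ Finset.range m, d j ω * d (j+1) ω
        = (∑ j ∈ Finset.range m, Z j ω) + ∑ j ∈ Finset.range m, d j ω * p j ω := by
      rw [← Finset.sum_add_distrib]
      exact Finset.sum_congr rfl fun j _ => by rw [hZ]; ring
    rw [hnum, add_div]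
  -- assemble the switching-rate average over `range`
  have hG : Tendsto (fun m : ℕ => (∑ j ∈ Finset.range m,
      (d (j+2) ω * (1 - d (j+1) ω) + d (j+1) ω * (1 - d (j+2) ω))) / (m:ℝ))
      atTop (𝓝 (2 * plim ω * (1 - plim ω))) := by
    have q1 : Tendsto (fun m : ℕ => (∑ j ∈ Finset.range (m+1), d (j+1) ω) / (m:ℝ))
        atTop (𝓝 (plim ω)) := tendsto_div_shift (fun k => ∑ j ∈ Finset.range k, d (j+1) ω) _ havg'
    have q2 : Tendsto (fun m : ℕ => d 1 ω / (m:ℝ)) atTop (𝓝 0) :=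
      tendsto_const_div_atTop_nhds_zero_nat _
    have q4 : Tendsto (fun m : ℕ => (∑ j ∈ Finset.range (m+1), d j ω * d (j+1) ω) / (m:ℝ))
        atTop (𝓝 (plim ω * plim ω)) := tendsto_div_shift (fun k => ∑ j ∈ Finset.range k, d j ω * d (j+1) ω) _ hC
    have q5 : Tendsto (fun m : ℕ => d 0 ω * d 1 ω / (m:ℝ)) atTop (𝓝 0) :=
      tendsto_const_div_atTop_nhds_zero_nat _
    have hcomb := ((q1.sub q2).add havg').sub ((q4.sub q5).const_mul 2)
    have hval : plim ω - 0 + plim ω - 2 * (plim ω * plim ω - 0)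
        = 2 * plim ω * (1 - plim ω) := by ring
    rw [hval] at hcomb
    refine hcomb.congr fun m => ?_
    have hnum : ∑ j ∈ Finset.range m,
        (d (j+2) ω * (1 - d (j+1) ω) + d (j+1) ω * (1 - d (j+2) ω))
        = ((∑ j ∈ Finset.range (m+1), d (j+1) ω) - d 1 ω)
          + (∑ j ∈ Finset.range m, d (j+1) ω)
          - 2 * ((∑ j ∈ Finset.range (m+1), d j ω * d (j+1) ω) - d 0 ω * d 1 ω) := by
      rw [Finset.sum_range_succ' (fun j => d (j+1) ω) m,
        Finset.sum_range_succ' (fun j => d j ω * d (j+1) ω) m]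
      have hsplit : ∑ j ∈ Finset.range m,
          (d (j+2) ω * (1 - d (j+1) ω) + d (j+1) ω * (1 - d (j+2) ω))
          = (∑ j ∈ Finset.range m, d (j+2) ω) + (∑ j ∈ Finset.range m, d (j+1) ω)
            - 2 * ∑ j ∈ Finset.range m, d (j+1) ω * d (j+2) ω := by
        rw [Finset.mul_sum, ← Finset.sum_add_distrib, ← Finset.sum_sub_distrib]
        exact Finset.sum_congr rfl fun j _ => by ring
      rw [hsplit]
      ring
    rw [hnum]
    ring
  -- conclude by composing with `n ↦ n - 1`
  have hcomp : Tendsto (fun n : ℕ => (∑ j ∈ Finset.range (n-1),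
      (d (j+2) ω * (1 - d (j+1) ω) + d (j+1) ω * (1 - d (j+2) ω))) / (((n-1 : ℕ)):ℝ))
      atTop (𝓝 (2 * plim ω * (1 - plim ω))) := hG.comp (tendsto_sub_atTop_nat 1)
  refine hcomp.congr' ?_
  filter_upwards [eventually_ge_atTop 2] with n hn
  have hcast : (((n-1 : ℕ)):ℝ) = (n:ℝ) - 1 := by
    have : 1 ≤ n := by omega
    push_cast [this]
    ring
  rw [hcast]
  congr 1
  rw [← Finset.Ico_add_one_right_eq_Icc, Finset.sum_Ico_eq_sum_range]
  have hcard : n + 1 - 2 = n - 1 := by omega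
  rw [hcard]
  refine Finset.sum_congr rfl fun j _ => ?_
  have h2j : 2 + j = j + 2 := by omega
  have h1j : (j + 2) - 1 = j + 1 := rfl
  rw [h2j, h1j]
end
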